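/- arXiv:1808.04747 — 9 statements merged into one kernel-verified Lean document; each statement's English description precedes it below -/
import Mathlib

section
/- Comparison principle for the QVI with positive switching cost: let c > 0. If u ∈ ℝ^{N×d} satisfies min(F_i(u)_l, u^i_l − (M_i u)_l) ≤ 0 for all i ∈ I and l ∈ {1,…,N}, and v ∈ ℝ^{N×d} satisfies min(F_i(v)_l, v^i_l − (M_i v)_l) ≥ 0 for all i ∈ I and l ∈ {1,…,N}, then u ≤ v componentwise. In particular, a solution of the QVI with switching cost c > 0 is unique. -/
open Filter Topology

noncomputable section

/-- A monotone system with constant `γ`: whenever `u i l - v i l` is the (nonnegative)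
maximum of all differences, `F u i l - F v i l ≥ γ (u i l - v i l)`. -/
def IsMonotoneSystem {N d : ℕ} (γ : ℝ)
    (F : (Fin d → Fin N → ℝ) → Fin d → Fin N → ℝ) : Prop :=
  ∀ u v : Fin d → Fin N → ℝ, ∀ i : Fin d, ∀ l : Fin N,
    (∀ (j : Fin d) (k : Fin N), u j k - v j k ≤ u i l - v i l) →
    0 ≤ u i l - v i l →
    γ * (u i l - v i l) ≤ F u i l - F v i l

/-- The intervention operator `(M_i u)_l = max_{j ≠ i} (u j l - c)`. -/
def Mop {N d : ℕ} (c : ℝ) (u : Fin d → Fin N → ℝ) (i : Fin d) (l : Fin N) : ℝ :=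
  ⨆ j : {j : Fin d // j ≠ i}, (u j l - c)

/-- Comparison principle for the QVI with positive switching cost, and uniqueness of
solutions of the QVI. -/
theorem qvi_comparison_and_uniqueness {N d : ℕ} (hN : 1 ≤ N) (hd : 2 ≤ d)
    (γ : ℝ) (hγ : 0 < γ)
    (F : (Fin d → Fin N → ℝ) → Fin d → Fin N → ℝ)
    (hFcont : Continuous F) (hFmono : IsMonotoneSystem γ F)
    (c : ℝ) (hc : 0 < c)
    (u v : Fin d → Fin N → ℝ)
    (hu : ∀ i l, min (F u i l) (u i l - Mop c u i l) ≤ 0)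
    (hv : ∀ i l, 0 ≤ min (F v i l) (v i l - Mop c v i l)) :
    (∀ i l, u i l ≤ v i l) ∧
    ∀ u₁ u₂ : Fin d → Fin N → ℝ,
      (∀ i l, min (F u₁ i l) (u₁ i l - Mop c u₁ i l) = 0) →
      (∀ i l, min (F u₂ i l) (u₂ i l - Mop c u₂ i l) = 0) →
      u₁ = u₂ := by

  classical
  have key : ∀ (u v : Fin d → Fin N → ℝ),
      (∀ i l, min (F u i l) (u i l - Mop c u i l) ≤ 0) →
      (∀ i l, 0 ≤ min (F v i l) (v i l - Mop c v i l)) →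
      ∀ i l, u i l ≤ v i l := by
    intro u v hu hv
    by_contra hcon
    push_neg at hcon
    obtain ⟨i₀, l₀, h₀⟩ := hcon
    set g : Fin d × Fin N → ℝ := fun p => u p.1 p.2 - v p.1 p.2 with hg
    have hne : (Finset.univ : Finset (Fin d × Fin N)).Nonempty :=
      ⟨(i₀, l₀), Finset.mem_univ _⟩
    obtain ⟨p, -, hpmax⟩ := Finset.exists_max_image Finset.univ g hne
    have hpmax' : ∀ r : Fin d × Fin N, g r ≤ g p := fun r => hpmax r (Finset.mem_univ r)
    set T : Finset (Fin d × Fin N) :=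
      Finset.univ.filter (fun q => ∀ r : Fin d × Fin N, g r ≤ g q) with hT
    have hpT : p ∈ T := Finset.mem_filter.mpr ⟨Finset.mem_univ _, hpmax'⟩
    obtain ⟨q, hqT, hq⟩ := Finset.exists_max_image T (fun q => u q.1 q.2) ⟨p, hpT⟩
    have hqmax : ∀ r : Fin d × Fin N, g r ≤ g q := (Finset.mem_filter.mp hqT).2
    obtain ⟨i, l⟩ := q
    have gpos : 0 < g (i, l) := lt_of_lt_of_le (by simpa [hg] using h₀) (hqmax (i₀, l₀))
    have hvmin := le_min_iff.mp (hv i l)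
    rcases min_le_iff.mp (hu i l) with hFu | hMu
    · -- F u i l ≤ 0
      have hmono := hFmono u v i l (fun j k => hqmax (j, k)) gpos.le
      have := mul_pos hγ gpos
      simp only [hg] at hmono this
      linarith [hvmin.1]
    · -- u i l ≤ Mop c u i l
      have huM : u i l ≤ Mop c u i l := by linarith
      have hvM : Mop c v i l ≤ v i l := by linarith [hvmin.2]
      haveI : Nonempty {j : Fin d // j ≠ i} := by
        obtain ⟨j, hj⟩ := Fintype.exists_ne_of_one_lt_card (by rw [Fintype.card_fin]; omega) i
        exact ⟨⟨j, hj⟩⟩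
      obtain ⟨j, hj⟩ := Finite.exists_max (fun j : {j : Fin d // j ≠ i} => u j.1 l - c)
      have hMu' : Mop c u i l ≤ u j.1 l - c := ciSup_le hj
      have hjv : v j.1 l - c ≤ Mop c v i l :=
        le_ciSup (f := fun j : {j : Fin d // j ≠ i} => v j.1 l - c)
          (Set.Finite.bddAbove (Set.finite_range _)) j
      have h1 : u i l + c ≤ u j.1 l := by linarith
      have h2 : v j.1 l ≤ v i l + c := by linarith
      have hjg : g (i, l) ≤ g (j.1, l) := by simp only [hg]; dsimp; linarith
      have hjT : (j.1, l) ∈ T :=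
        Finset.mem_filter.mpr ⟨Finset.mem_univ _, fun r => le_trans (hqmax r) hjg⟩
      have := hq (j.1, l) hjT
      dsimp at this
      linarith
  refine ⟨key u v hu hv, fun u₁ u₂ h1 h2 => ?_⟩
  have h12 : ∀ i l, u₁ i l ≤ u₂ i l :=
    key u₁ u₂ (fun i l => (h1 i l).le) (fun i l => (h2 i l).ge)
  have h21 : ∀ i l, u₂ i l ≤ u₁ i l :=
    key u₂ u₁ (fun i l => (h2 i l).le) (fun i l => (h1 i l).ge)
  funext i l
  exact le_antisymm (h12 i l) (h21 i l)
end
end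

section
/- Comparison principle for the penalized equation: let ρ ≥ 0 and c ≥ 0. If u ∈ ℝ^{N×d} satisfies F_i(u)_l − ρ·Σ_{j≠i} π(u^j_l − c − u^i_l) ≤ 0 for all i ∈ I and l ∈ {1,…,N}, and v ∈ ℝ^{N×d} satisfies F_i(v)_l − ρ·Σ_{j≠i} π(v^j_l − c − v^i_l) ≥ 0 for all i ∈ I and l ∈ {1,…,N}, then u ≤ v componentwise. -/
open Filter Topology

noncomputable section

/-- The sup-norm `‖u‖ = max_{i,l} |u i l|`. -/
def supNorm {N d : ℕ} (u : Fin d → Fin N → ℝ) : ℝ :=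
  ⨆ p : Fin d × Fin N, |u p.1 p.2|

/-- A penalty function: continuous, non-decreasing, vanishing on `(-∞,0]` and
positive on `(0,∞)`. -/
def IsPenaltyFunction (π : ℝ → ℝ) : Prop :=
  Continuous π ∧ Monotone π ∧ (∀ y : ℝ, y ≤ 0 → π y = 0) ∧ (∀ y : ℝ, 0 < y → 0 < π y)

/-- A concave system: each `F_i` is concave (componentwise). -/
def IsConcaveSystem {N d : ℕ}
    (F : (Fin d → Fin N → ℝ) → Fin d → Fin N → ℝ) : Prop :=
  ∀ (i : Fin d) (u v : Fin d → Fin N → ℝ) (θ : ℝ), 0 ≤ θ → θ ≤ 1 → ∀ l : Fin N,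
    θ * F u i l + (1 - θ) * F v i l ≤ F (fun j k => θ * u j k + (1 - θ) * v j k) i l

/-- Comparison principle for the penalized equation. -/
theorem penalized_comparison {N d : ℕ} (hN : 1 ≤ N) (hd : 2 ≤ d)
    (γ : ℝ) (hγ : 0 < γ)
    (F : (Fin d → Fin N → ℝ) → Fin d → Fin N → ℝ)
    (hFcont : Continuous F) (hFmono : IsMonotoneSystem γ F)
    (π : ℝ → ℝ) (hπ : IsPenaltyFunction π)
    (ρ : ℝ) (hρ : 0 ≤ ρ) (c : ℝ) (hc : 0 ≤ c)
    (u v : Fin d → Fin N → ℝ)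
    (hu : ∀ i l, F u i l - ρ * ∑ j ∈ Finset.univ.erase i, π (u j l - c - u i l) ≤ 0)
    (hv : ∀ i l, 0 ≤ F v i l - ρ * ∑ j ∈ Finset.univ.erase i, π (v j l - c - v i l)) :
    ∀ i l, u i l ≤ v i l := by
  intro i l
  have hne : Nonempty (Fin d × Fin N) := ⟨(⟨0, by omega⟩, ⟨0, by omega⟩)⟩
  obtain ⟨p, hp⟩ := Finite.exists_max (fun q : Fin d × Fin N => u q.1 q.2 - v q.1 q.2)
  by_cases hm0 : u p.1 p.2 - v p.1 p.2 ≤ 0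
  · have := hp (i, l); simp only at this; linarith
  push_neg at hm0
  exfalso
  have hmono := hFmono u v p.1 p.2 (fun j k => hp (j, k)) (le_of_lt hm0)
  have hsum : ∑ j ∈ Finset.univ.erase p.1, π (u j p.2 - c - u p.1 p.2)
      ≤ ∑ j ∈ Finset.univ.erase p.1, π (v j p.2 - c - v p.1 p.2) := by
    apply Finset.sum_le_sum
    intro j _
    apply hπ.2.1
    have := hp (j, p.2)
    simp only at this
    linarith
  have h1 := hu p.1 p.2
  have h2 := hv p.1 p.2
  have hmul := mul_le_mul_of_nonneg_left hsum hρ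
  nlinarith [mul_pos hγ hm0]
end
end

section
/- A priori bound for the penalized equation: let ρ ≥ 0 and c ≥ 0, and suppose u^ρ ∈ ℝ^{N×d} satisfies F_i(u^ρ)_l − ρ·Σ_{j≠i} π((u^ρ)^j_l − c − (u^ρ)^i_l) = 0 for all i ∈ I and l ∈ {1,…,N}. Then ‖u^ρ‖ ≤ ‖F(0)‖/γ. -/
open Filter Topology

noncomputable section

/-- A priori bound for solutions of the penalized equation. -/
theorem penalized_apriori_bound {N d : ℕ} (hN : 1 ≤ N) (hd : 2 ≤ d)
    (γ : ℝ) (hγ : 0 < γ)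
    (F : (Fin d → Fin N → ℝ) → Fin d → Fin N → ℝ)
    (hFcont : Continuous F) (hFmono : IsMonotoneSystem γ F)
    (π : ℝ → ℝ) (hπ : IsPenaltyFunction π)
    (ρ : ℝ) (hρ : 0 ≤ ρ) (c : ℝ) (hc : 0 ≤ c)
    (uρ : Fin d → Fin N → ℝ)
    (huρ : ∀ i l, F uρ i l - ρ * ∑ j ∈ Finset.univ.erase i, π (uρ j l - c - uρ i l) = 0) :
    supNorm uρ ≤ supNorm (F 0) / γ := by
  have hNe : Nonempty (Fin N) := ⟨⟨0, by omega⟩⟩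
  have hde : Nonempty (Fin d) := ⟨⟨0, by omega⟩⟩
  obtain ⟨hπc, hπm, hπ0, hπpos⟩ := hπ
  have hπnn : ∀ y, 0 ≤ π y := by
    intro y
    rcases le_or_gt y 0 with h | h
    · rw [hπ0 y h]
    · have := hπm h.le
      rwa [hπ0 0 le_rfl] at this
  have hsupF : ∀ p : Fin d × Fin N, |F 0 p.1 p.2| ≤ supNorm (F 0) := by
    intro p
    rw [supNorm]
    exact le_ciSup (f := fun p : Fin d × Fin N => |F 0 p.1 p.2|) (Set.Finite.bddAbove (Set.finite_range _)) p
  have hsupF0 : 0 ≤ supNorm (F 0) :=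
    le_trans (abs_nonneg _) (hsupF (Classical.arbitrary _))
  have hF : ∀ i l, F uρ i l = ρ * ∑ j ∈ Finset.univ.erase i, π (uρ j l - c - uρ i l) := by
    intro i l; have := huρ i l; linarith
  have hFnn : ∀ i l, 0 ≤ F uρ i l := by
    intro i l; rw [hF i l]
    exact mul_nonneg hρ (Finset.sum_nonneg fun j _ => hπnn _)
  obtain ⟨pmax, hpmax⟩ := Finite.exists_max (fun p : Fin d × Fin N => uρ p.1 p.2)
  obtain ⟨pmin, hpmin⟩ := Finite.exists_min (fun p : Fin d × Fin N => uρ p.1 p.2)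
  set B := supNorm (F 0) / γ with hB
  have hBnn : 0 ≤ B := div_nonneg hsupF0 hγ.le
  have hMbound : uρ pmax.1 pmax.2 ≤ B := by
    rcases le_or_gt (uρ pmax.1 pmax.2) 0 with h | h
    · exact h.trans hBnn
    · have hzero : F uρ pmax.1 pmax.2 = 0 := by
        rw [hF]
        have hsum : ∑ j ∈ Finset.univ.erase pmax.1,
            π (uρ j pmax.2 - c - uρ pmax.1 pmax.2) = 0 := by
          apply Finset.sum_eq_zero
          intro j _
          apply hπ0
          have := hpmax (j, pmax.2)
          simp only at this ⊢
          linarith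
        rw [hsum, mul_zero]
      have hm := hFmono uρ 0 pmax.1 pmax.2
        (fun j k => by have := hpmax (j, k); simp only [Pi.zero_apply, sub_zero]; exact this)
        (by simp only [Pi.zero_apply, sub_zero]; exact h.le)
      simp only [Pi.zero_apply, sub_zero] at hm
      have h2 := hsupF pmax
      have h3 := neg_abs_le (F 0 pmax.1 pmax.2)
      rw [hB, le_div_iff₀ hγ, mul_comm]
      linarith
  have hmbound : -B ≤ uρ pmin.1 pmin.2 := by
    rcases le_or_gt 0 (uρ pmin.1 pmin.2) with h | h
    · linarith
    · have hm := hFmono 0 uρ pmin.1 pmin.2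
        (fun j k => by have := hpmin (j, k); simp only [Pi.zero_apply, zero_sub]; linarith)
        (by simp only [Pi.zero_apply, zero_sub]; linarith)
      simp only [Pi.zero_apply, zero_sub] at hm
      have h2 := hsupF pmin
      have h3 := le_abs_self (F 0 pmin.1 pmin.2)
      have h4 := hFnn pmin.1 pmin.2
      rw [neg_le, hB, le_div_iff₀ hγ, mul_comm]
      linarith
  rw [supNorm]
  apply ciSup_le
  intro p
  rw [abs_le]
  constructor
  · exact le_trans hmbound (hpmin p)
  · exact le_trans (hpmax p) hMbound
end
end

section
/- Well-posedness of the penalized problem: for any penalty parameter ρ ≥ 0 and switching cost c ≥ 0, there exists a unique u^ρ ∈ ℝ^{N×d} such that F_i(u^ρ)_l − ρ·Σ_{j≠i} π((u^ρ)^j_l − c − (u^ρ)^i_l) = 0 for all i ∈ I and l ∈ {1,…,N}, and this solution satisfies ‖u^ρ‖ ≤ ‖F(0)‖/γ. -/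
open Filter Topology

noncomputable section
set_option maxHeartbeats 1000000

section Aux
variable {N d : ℕ} [NeZero N] [NeZero d]

lemma abs_le_supNorm (u : Fin d → Fin N → ℝ) (i : Fin d) (l : Fin N) :
    |u i l| ≤ supNorm u :=
  le_ciSup (f := fun p : Fin d × Fin N => |u p.1 p.2|)
    (Set.Finite.bddAbove (Set.finite_range _)) ((i, l) : Fin d × Fin N)

lemma supNorm_le {u : Fin d → Fin N → ℝ} {a : ℝ} (h : ∀ i l, |u i l| ≤ a) :
    supNorm u ≤ a :=
  ciSup_le fun p => h p.1 p.2

lemma supNorm_nonneg (u : Fin d → Fin N → ℝ) : 0 ≤ supNorm u := by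
  obtain ⟨i⟩ : Nonempty (Fin d) := inferInstance
  obtain ⟨l⟩ : Nonempty (Fin N) := inferInstance
  exact le_trans (abs_nonneg _) (abs_le_supNorm u i l)

lemma supNorm_continuous : Continuous fun u : Fin d → Fin N → ℝ => supNorm u := by
  have h : ∀ u : Fin d → Fin N → ℝ, supNorm u =
      Finset.univ.sup' Finset.univ_nonempty (fun p : Fin d × Fin N => |u p.1 p.2|) := by
    intro u
    exact (Finset.sup'_univ_eq_ciSup _).symm
  simp only [h]
  apply Continuous.finset_sup'_apply
  intro p _
  exact continuous_abs.comp ((continuous_apply p.2).comp (continuous_apply p.1))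

end Aux

section Core
variable {N d : ℕ} [NeZero N] [NeZero d]

lemma ms_comparison {γ : ℝ} (hγ : 0 < γ)
    {G : (Fin d → Fin N → ℝ) → Fin d → Fin N → ℝ} (hG : IsMonotoneSystem γ G)
    (u v : Fin d → Fin N → ℝ) (h : ∀ i l, G u i l ≤ G v i l) :
    ∀ i l, u i l ≤ v i l := by
  intro i l
  obtain ⟨p0, hp0⟩ := Finite.exists_max (fun p : Fin d × Fin N => u p.1 p.2 - v p.1 p.2)
  by_contra hlt
  push_neg at hlt
  have hpos : 0 < u p0.1 p0.2 - v p0.1 p0.2 :=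
    lt_of_lt_of_le (by linarith) (hp0 (i, l))
  have h1 := hG u v p0.1 p0.2 (fun j k => hp0 (j, k)) hpos.le
  nlinarith [h p0.1 p0.2]

lemma ms_wellposed {γ : ℝ} (hγ : 0 < γ)
    (G : (Fin d → Fin N → ℝ) → Fin d → Fin N → ℝ)
    (hGc : Continuous G) (hG : IsMonotoneSystem γ G) :
    ∃ u, (∀ i l, G u i l = 0) ∧ supNorm u ≤ supNorm (G 0) / γ ∧
      ∀ v, (∀ i l, G v i l = 0) → v = u := by
  set R0 := supNorm (G 0) with hR0def
  have hR0 : 0 ≤ R0 := supNorm_nonneg _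
  set Rd := R0 / γ with hRddef
  have hRd0 : 0 ≤ Rd := div_nonneg hR0 hγ.le
  have hRdγ : γ * Rd = R0 := by
    rw [hRddef]
    field_simp
  have habsG0 : ∀ i l, |G 0 i l| ≤ R0 := fun i l => abs_le_supNorm _ i l
  -- Existence via minimization of u ↦ supNorm (G u) on a compact box
  set R' := 2 * Rd + 1 with hR'def
  set K : Set (Fin d → Fin N → ℝ) :=
    Set.Icc (fun _ _ => -R') (fun _ _ => R') with hKdef
  have hKc : IsCompact K := isCompact_Icc
  have hmemK : ∀ {w : Fin d → Fin N → ℝ}, (∀ i l, |w i l| ≤ R') → w ∈ K := by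
    intro w hw
    constructor <;> intro i <;> intro l <;>
      [exact neg_le_of_abs_le (hw i l); exact le_of_abs_le (hw i l)]
  have h0K : (0 : Fin d → Fin N → ℝ) ∈ K := by
    apply hmemK
    intro i l
    simp only [Pi.zero_apply, abs_zero]
    linarith
  have hVc : Continuous fun u : Fin d → Fin N → ℝ => supNorm (G u) :=
    supNorm_continuous.comp hGc
  obtain ⟨us, husK, hmin⟩ := hKc.exists_isMinOn ⟨0, h0K⟩ hVc.continuousOn
  set m := supNorm (G us) with hmdef
  have hm0 : 0 ≤ m := supNorm_nonneg _
  have hmR0 : m ≤ R0 := hmin h0K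
  have habsGus : ∀ i l, |G us i l| ≤ m := fun i l => abs_le_supNorm _ i l
  -- the minimum value is 0
  have hmzero : m ≤ 0 := by
    by_contra hmpos
    push_neg at hmpos
    -- a priori bound on the minimizer
    have husb : ∀ i l, |us i l| ≤ 2 * Rd := by
      obtain ⟨q, hq⟩ := Finite.exists_max (fun p : Fin d × Fin N => |us p.1 p.2|)
      intro i l
      refine le_trans (hq (i, l)) ?_
      rcases le_or_gt 0 (us q.1 q.2) with hpos | hneg
      · have h1 := hG us 0 q.1 q.2
          (fun j k => by
            have := hq (j, k)
            simp only [Pi.zero_apply]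
            calc us j k - 0 ≤ |us j k| := by simp [le_abs_self]
              _ ≤ |us q.1 q.2| := hq (j, k)
              _ = us q.1 q.2 - 0 := by rw [abs_of_nonneg hpos]; ring)
          (by simpa using hpos)
        have h2 := habsGus q.1 q.2
        have h3 := habsG0 q.1 q.2
        rw [abs_of_nonneg hpos]
        rw [abs_le] at h2 h3
        simp only [Pi.zero_apply, sub_zero] at h1
        nlinarith
      · have h1 := hG 0 us q.1 q.2
          (fun j k => by
            simp only [Pi.zero_apply]
            calc 0 - us j k = -(us j k) := by ring
              _ ≤ |us j k| := neg_le_abs _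
              _ ≤ |us q.1 q.2| := hq (j, k)
              _ = 0 - us q.1 q.2 := by rw [abs_of_neg hneg]; ring)
          (by simp only [Pi.zero_apply]; linarith)
        have h2 := habsGus q.1 q.2
        have h3 := habsG0 q.1 q.2
        rw [abs_of_neg hneg]
        rw [abs_le] at h2 h3
        simp only [Pi.zero_apply, zero_sub] at h1
        nlinarith
    -- direction of descent
    set hdir : Fin d → Fin N → ℝ := fun i l =>
      if 0 < G us i l then 1 else if G us i l < 0 then -1 else 0 with hdirdef
    have hdir_le : ∀ i l, hdir i l ≤ 1 := by
      intro i l; simp only [hdirdef]; split_ifs <;> norm_num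
    have hdir_ge : ∀ i l, -1 ≤ hdir i l := by
      intro i l; simp only [hdirdef]; split_ifs <;> norm_num
    have hdir_abs : ∀ i l, |hdir i l| ≤ 1 := fun i l =>
      abs_le.2 ⟨hdir_ge i l, hdir_le i l⟩
    set w : ℝ → Fin d → Fin N → ℝ := fun t j k => us j k - t * hdir j k with hwdef
    have hwc : Continuous w := by
      apply continuous_pi; intro j; apply continuous_pi; intro k
      exact continuous_const.sub (continuous_id.mul continuous_const)
    set Q : ℝ → ℝ := fun t => supNorm (fun i l => G (w t) i l - G us i l) with hQdef
    have hQc : Continuous Q := by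
      have hc : Continuous fun t : ℝ => (fun i l => G (w t) i l - G us i l) := by
        apply continuous_pi; intro i; apply continuous_pi; intro l
        exact (((continuous_apply l).comp (continuous_apply i)).comp
          (hGc.comp hwc)).sub continuous_const
      exact supNorm_continuous.comp hc
    have hQ0 : Q 0 = 0 := by
      have : (fun i l => G (w 0) i l - G us i l) = fun _ _ => (0 : ℝ) := by
        funext i l
        have : w 0 = us := by funext j k; simp [hwdef]
        rw [this]; ring
      rw [hQdef]
      simp only [this]
      apply le_antisymm
      · apply supNorm_le; intro i l; simp
      · exact supNorm_nonneg _
    -- pick a small step t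
    have hev1 : ∀ᶠ t in 𝓝[>] (0:ℝ), Q t < m / 2 := by
      apply eventually_nhdsWithin_of_eventually_nhds
      have := hQc.continuousAt (x := 0)
      rw [ContinuousAt, hQ0] at this
      exact this.eventually_lt_const (by linarith)
    have hev2 : ∀ᶠ t in 𝓝[>] (0:ℝ), t < min 1 (m / (2 * γ)) := by
      apply eventually_nhdsWithin_of_eventually_nhds
      apply Filter.Tendsto.eventually_lt_const _ tendsto_id
      positivity
    have hev3 : ∀ᶠ t in 𝓝[>] (0:ℝ), 0 < t := eventually_mem_nhdsWithin
    obtain ⟨t, hQt, htε, ht0⟩ := (hev1.and (hev2.and hev3)).exists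
    have ht1 : t ≤ 1 := le_of_lt (lt_of_lt_of_le htε (min_le_left _ _))
    have htγ : γ * t < m / 2 := by
      have := lt_of_lt_of_le htε (min_le_right _ _)
      calc γ * t < γ * (m / (2 * γ)) := by exact mul_lt_mul_of_pos_left this hγ
        _ = m / 2 := by field_simp
    -- the perturbed point
    have hwK : w t ∈ K := by
      apply hmemK
      intro i l
      have h1 := husb i l
      have h2 := hdir_abs i l
      simp only [hwdef]
      calc |us i l - t * hdir i l| ≤ |us i l| + |t * hdir i l| := abs_sub _ _
        _ ≤ 2 * Rd + t * 1 := by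
            apply add_le_add h1
            rw [abs_mul, abs_of_pos ht0]
            exact mul_le_mul_of_nonneg_left h2 ht0.le
        _ ≤ R' := by simp only [hR'def]; linarith
    have hQtb : ∀ i l, |G (w t) i l - G us i l| ≤ Q t := fun i l =>
      abs_le_supNorm (fun i l => G (w t) i l - G us i l) i l
    -- per-coordinate decrease
    have hdec : ∀ i l, |G (w t) i l| ≤ m - γ * t := by
      intro i l
      have hq := lt_of_le_of_lt (hQtb i l) hQt
      have ha := habsGus i l
      rw [abs_le] at ha
      rw [abs_sub_lt_iff] at hq
      rcases lt_trichotomy (G us i l) 0 with hneg | hzero | hpos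
      · have hd : hdir i l = -1 := by simp [hdirdef, hneg, not_lt.2 hneg.le, asymm hneg]
        have h1 := hG (w t) us i l
          (fun j k => by
            simp only [hwdef]
            have := hdir_ge j k
            have : -(t * hdir j k) ≤ t := by nlinarith
            rw [hd]; ring_nf; nlinarith)
          (by simp only [hwdef, hd]; ring_nf; nlinarith)
        have h2 : w t i l - us i l = t := by simp only [hwdef, hd]; ring
        rw [h2] at h1
        rw [abs_le]
        constructor <;> nlinarith
      · have hd : hdir i l = 0 := by simp [hdirdef, hzero]
        rw [abs_le]
        rw [hzero] at hq
        constructor <;> nlinarith [hq.1, hq.2]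
      · have hd : hdir i l = 1 := by simp [hdirdef, hpos]
        have h1 := hG us (w t) i l
          (fun j k => by
            simp only [hwdef]
            have := hdir_le j k
            have : t * hdir j k ≤ t := by nlinarith
            rw [hd]; ring_nf; nlinarith)
          (by simp only [hwdef, hd]; ring_nf; nlinarith)
        have h2 : us i l - w t i l = t := by simp only [hwdef, hd]; ring
        rw [h2] at h1
        rw [abs_le]
        constructor <;> nlinarith
    have : m ≤ m - γ * t := le_trans (hmin hwK) (supNorm_le hdec)
    nlinarith
  -- conclude: G us = 0
  have hzero : ∀ i l, G us i l = 0 := fun i l =>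
    abs_eq_zero.mp (le_antisymm (le_trans (habsGus i l) hmzero) (abs_nonneg _))
  -- a priori bound for any solution
  have hGc_pos : ∀ i l, 0 ≤ G (fun _ _ => Rd) i l := by
    intro i l
    have h1 := hG (fun _ _ => Rd) 0 i l
      (fun j k => by simp) (by simpa using hRd0)
    have h3 := habsG0 i l
    rw [abs_le] at h3
    simp only [Pi.zero_apply, sub_zero] at h1
    nlinarith
  have hGc_neg : ∀ i l, G (fun _ _ => -Rd) i l ≤ 0 := by
    intro i l
    have h1 := hG 0 (fun _ _ => -Rd) i l
      (fun j k => by simp) (by simp only [Pi.zero_apply]; linarith)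
    have h3 := habsG0 i l
    rw [abs_le] at h3
    simp only [Pi.zero_apply, zero_sub, sub_neg_eq_add, zero_add] at h1
    nlinarith
  have bound : ∀ u, (∀ i l, G u i l = 0) → supNorm u ≤ Rd := by
    intro u hu
    apply supNorm_le
    intro i l
    rw [abs_le]
    constructor
    · have := ms_comparison hγ hG (fun _ _ => -Rd) u
        (fun i l => by rw [hu i l]; exact hGc_neg i l) i l
      linarith
    · exact ms_comparison hγ hG u (fun _ _ => Rd)
        (fun i l => by rw [hu i l]; exact hGc_pos i l) i l
  refine ⟨us, hzero, bound us hzero, ?_⟩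
  intro v hv
  funext i l
  exact le_antisymm
    (ms_comparison hγ hG v us (fun i l => by rw [hv i l, hzero i l]) i l)
    (ms_comparison hγ hG us v (fun i l => by rw [hv i l, hzero i l]) i l)

end Core

/-- Well-posedness of the penalized problem: existence, uniqueness and a priori bound. -/
theorem penalized_wellposedness {N d : ℕ} (hN : 1 ≤ N) (hd : 2 ≤ d)
    (γ : ℝ) (hγ : 0 < γ)
    (F : (Fin d → Fin N → ℝ) → Fin d → Fin N → ℝ)
    (hFcont : Continuous F) (hFmono : IsMonotoneSystem γ F)
    (π : ℝ → ℝ) (hπ : IsPenaltyFunction π)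
    (ρ : ℝ) (hρ : 0 ≤ ρ) (c : ℝ) (hc : 0 ≤ c) :
    ∃ uρ : Fin d → Fin N → ℝ,
      (∀ i l, F uρ i l - ρ * ∑ j ∈ Finset.univ.erase i, π (uρ j l - c - uρ i l) = 0) ∧
      supNorm uρ ≤ supNorm (F 0) / γ ∧
      ∀ v : Fin d → Fin N → ℝ,
        (∀ i l, F v i l - ρ * ∑ j ∈ Finset.univ.erase i, π (v j l - c - v i l) = 0) →
        v = uρ := by
  haveI : NeZero N := ⟨by omega⟩
  haveI : NeZero d := ⟨by omega⟩
  obtain ⟨hπc, hπm, hπ0, hπp⟩ := hπ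
  set G : (Fin d → Fin N → ℝ) → Fin d → Fin N → ℝ :=
    fun u i l => F u i l - ρ * ∑ j ∈ Finset.univ.erase i, π (u j l - c - u i l)
    with hGdef
  have hGc : Continuous G := by
    apply continuous_pi; intro i; apply continuous_pi; intro l
    apply Continuous.sub
    · exact (continuous_apply l).comp ((continuous_apply i).comp hFcont)
    · apply continuous_const.mul
      apply continuous_finset_sum
      intro j _
      exact hπc.comp (by fun_prop)
  have hGm : IsMonotoneSystem γ G := by
    intro u v i l hmax hpos
    have hF := hFmono u v i l hmax hpos
    have hsum : ∑ j ∈ Finset.univ.erase i, π (u j l - c - u i l)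
        ≤ ∑ j ∈ Finset.univ.erase i, π (v j l - c - v i l) := by
      apply Finset.sum_le_sum
      intro j _
      apply hπm
      have := hmax j l
      linarith
    have hrs := mul_le_mul_of_nonneg_left hsum hρ
    simp only [hGdef]
    linarith
  have hG0 : G 0 = F 0 := by
    funext i l
    simp only [hGdef, Pi.zero_apply]
    rw [Finset.sum_eq_zero (fun j _ => hπ0 _ (by linarith)), mul_zero, sub_zero]
  obtain ⟨u, hu, hb, huniq⟩ := ms_wellposed hγ G hGc hGm
  rw [hG0] at hb
  exact ⟨u, hu, hb, huniq⟩
end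
end

section
/- Monotone convergence of the penalty approximations: fix a switching cost c ≥ 0, and for each ρ ≥ 0 let u^ρ ∈ ℝ^{N×d} denote the unique solution of the penalized equation with penalty parameter ρ and switching cost c. Then the map ρ ↦ u^ρ is componentwise nondecreasing, and there exists u ∈ ℝ^{N×d} with u^ρ ≤ u for all ρ ≥ 0 such that u^ρ converges componentwise to u as ρ → ∞. Moreover, if c > 0 then u satisfies the QVI: min(F_i(u)_l, u^i_l − (M_i u)_l) = 0 for all i ∈ I, l ∈ {1,…,N}. -/
open Filter Topology

noncomputable section

/-- Monotone convergence of the penalty approximations as `ρ → ∞`, and the limit solves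
the QVI when the switching cost is positive. -/
theorem penalized_monotone_convergence {N d : ℕ} (hN : 1 ≤ N) (hd : 2 ≤ d)
    (γ : ℝ) (hγ : 0 < γ)
    (F : (Fin d → Fin N → ℝ) → Fin d → Fin N → ℝ)
    (hFcont : Continuous F) (hFmono : IsMonotoneSystem γ F)
    (π : ℝ → ℝ) (hπ : IsPenaltyFunction π)
    (c : ℝ) (hc : 0 ≤ c)
    (U : ℝ → Fin d → Fin N → ℝ)
    (hU : ∀ ρ : ℝ, 0 ≤ ρ → ∀ i l,
      F (U ρ) i l - ρ * ∑ j ∈ Finset.univ.erase i, π (U ρ j l - c - U ρ i l) = 0) :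
    (∀ ρ₁ ρ₂ : ℝ, 0 ≤ ρ₁ → ρ₁ ≤ ρ₂ → ∀ i l, U ρ₁ i l ≤ U ρ₂ i l) ∧
    ∃ u : Fin d → Fin N → ℝ,
      (∀ ρ : ℝ, 0 ≤ ρ → ∀ i l, U ρ i l ≤ u i l) ∧
      (∀ i l, Filter.Tendsto (fun ρ => U ρ i l) Filter.atTop (nhds (u i l))) ∧
      (0 < c → ∀ i l, min (F u i l) (u i l - Mop c u i l) = 0) := by

  obtain ⟨hπc, hπm, hπ0, hπpos⟩ := hπ
  have hπnn : ∀ y : ℝ, 0 ≤ π y := by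
    intro y
    rcases le_or_gt y 0 with h | h
    · exact (hπ0 y h).ge
    · exact (hπpos y h).le
  haveI hne : Nonempty (Fin d × Fin N) := ⟨⟨⟨0, by omega⟩, ⟨0, by omega⟩⟩⟩
  -- monotonicity in ρ
  have hmono : ∀ ρ₁ ρ₂ : ℝ, 0 ≤ ρ₁ → ρ₁ ≤ ρ₂ → ∀ i l, U ρ₁ i l ≤ U ρ₂ i l := by
    intro ρ₁ ρ₂ h1 h12 i0 l0
    by_contra hcon
    push_neg at hcon
    obtain ⟨p, hp⟩ := Finite.exists_max (fun p : Fin d × Fin N => U ρ₁ p.1 p.2 - U ρ₂ p.1 p.2)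
    have hp' : ∀ j k, U ρ₁ j k - U ρ₂ j k ≤ U ρ₁ p.1 p.2 - U ρ₂ p.1 p.2 := fun j k => hp (j, k)
    have hm : 0 < U ρ₁ p.1 p.2 - U ρ₂ p.1 p.2 :=
      lt_of_lt_of_le (sub_pos.2 hcon) (hp' i0 l0)
    have hF := hFmono (U ρ₁) (U ρ₂) p.1 p.2 hp' hm.le
    have e1 := hU ρ₁ h1 p.1 p.2
    have e2 := hU ρ₂ (h1.trans h12) p.1 p.2
    have hsumle : ∑ j ∈ Finset.univ.erase p.1, π (U ρ₁ j p.2 - c - U ρ₁ p.1 p.2)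
        ≤ ∑ j ∈ Finset.univ.erase p.1, π (U ρ₂ j p.2 - c - U ρ₂ p.1 p.2) :=
      Finset.sum_le_sum (fun j _ => hπm (by have := hp' j p.2; linarith))
    have hsnn : 0 ≤ ∑ j ∈ Finset.univ.erase p.1, π (U ρ₁ j p.2 - c - U ρ₁ p.1 p.2) :=
      Finset.sum_nonneg fun j _ => hπnn _
    have h2 : (0:ℝ) ≤ ρ₂ := h1.trans h12
    have hA : ρ₁ * ∑ j ∈ Finset.univ.erase p.1, π (U ρ₁ j p.2 - c - U ρ₁ p.1 p.2)
        ≤ ρ₂ * ∑ j ∈ Finset.univ.erase p.1, π (U ρ₁ j p.2 - c - U ρ₁ p.1 p.2) :=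
      mul_le_mul_of_nonneg_right h12 hsnn
    have hB2 : ρ₂ * ∑ j ∈ Finset.univ.erase p.1, π (U ρ₁ j p.2 - c - U ρ₁ p.1 p.2)
        ≤ ρ₂ * ∑ j ∈ Finset.univ.erase p.1, π (U ρ₂ j p.2 - c - U ρ₂ p.1 p.2) :=
      mul_le_mul_of_nonneg_left hsumle h2
    nlinarith [mul_pos hγ hm]
  -- a constant upper barrier B
  obtain ⟨q, hq⟩ := Finite.exists_min (fun p : Fin d × Fin N => F (fun _ _ => (0:ℝ)) p.1 p.2)
  set a : ℝ := F (fun _ _ => (0:ℝ)) q.1 q.2 with ha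
  set B : ℝ := max 0 (-a / γ) with hBdef
  have hB0 : (0:ℝ) ≤ B := le_max_left _ _
  have hγB : -a ≤ γ * B := by
    have h1 : -a / γ ≤ B := le_max_right _ _
    have h2 : γ * (-a / γ) ≤ γ * B := mul_le_mul_of_nonneg_left h1 hγ.le
    have h3 : γ * (-a / γ) = -a := by field_simp
    linarith
  have hFB : ∀ i l, 0 ≤ F (fun _ _ => B) i l := by
    intro i l
    have hm := hFmono (fun _ _ => B) (fun _ _ => (0:ℝ)) i l (fun j k => le_refl _)
      (by simpa using hB0)
    simp only [sub_zero] at hm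
    have hq' : a ≤ F (fun _ _ => (0:ℝ)) i l := hq (i, l)
    linarith
  -- uniform upper bound
  have hub : ∀ ρ : ℝ, 0 ≤ ρ → ∀ i l, U ρ i l ≤ B := by
    intro ρ hρ i0 l0
    by_contra hcon
    push_neg at hcon
    obtain ⟨p, hp⟩ := Finite.exists_max (fun p : Fin d × Fin N => U ρ p.1 p.2)
    have hp' : ∀ j k, U ρ j k ≤ U ρ p.1 p.2 := fun j k => hp (j, k)
    have hm : 0 < U ρ p.1 p.2 - B := by have := hp' i0 l0; linarith
    have hF := hFmono (U ρ) (fun _ _ => B) p.1 p.2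
      (fun j k => by have := hp' j k; linarith) hm.le
    have e := hU ρ hρ p.1 p.2
    have hz : ∑ j ∈ Finset.univ.erase p.1, π (U ρ j p.2 - c - U ρ p.1 p.2) = 0 :=
      Finset.sum_eq_zero fun j _ => hπ0 _ (by have := hp' j p.2; linarith)
    rw [hz, mul_zero, sub_zero] at e
    have hFBp := hFB p.1 p.2
    nlinarith [mul_pos hγ hm]
  -- the limit candidate
  have hbdd : ∀ i l, BddAbove (Set.range fun n : ℕ => U n i l) := by
    intro i l
    refine ⟨B, ?_⟩
    rintro x ⟨n, rfl⟩
    exact hub n (Nat.cast_nonneg n) i l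
  set u : Fin d → Fin N → ℝ := fun i l => ⨆ n : ℕ, U n i l with hudef
  have hle : ∀ ρ : ℝ, 0 ≤ ρ → ∀ i l, U ρ i l ≤ u i l := by
    intro ρ hρ i l
    calc U ρ i l ≤ U (⌈ρ⌉₊ : ℝ) i l := hmono ρ _ hρ (Nat.le_ceil ρ) i l
    _ ≤ u i l := le_ciSup (hbdd i l) ⌈ρ⌉₊
  have htend : ∀ i l, Tendsto (fun ρ => U ρ i l) atTop (𝓝 (u i l)) := by
    intro i l
    rw [tendsto_order]
    constructor
    · intro x hx
      obtain ⟨n, hn⟩ := exists_lt_of_lt_ciSup (show x < ⨆ n : ℕ, U n i l from hx)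
      filter_upwards [eventually_ge_atTop (n:ℝ)] with ρ hρ
      exact hn.trans_le (hmono n ρ (Nat.cast_nonneg n) hρ i l)
    · intro x hx
      filter_upwards [eventually_ge_atTop (0:ℝ)] with ρ hρ
      exact (hle ρ hρ i l).trans_lt hx
  have hUt : Tendsto U atTop (𝓝 u) := by
    rw [tendsto_pi_nhds]
    intro i
    rw [tendsto_pi_nhds]
    intro l
    exact htend i l
  have hFt : ∀ i l, Tendsto (fun ρ => F (U ρ) i l) atTop (𝓝 (F u i l)) := by
    intro i l
    have h1 : Tendsto (fun ρ => F (U ρ)) atTop (𝓝 (F u)) := (hFcont.tendsto u).comp hUt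
    exact tendsto_pi_nhds.1 (tendsto_pi_nhds.1 h1 i) l
  refine ⟨hmono, u, hle, htend, ?_⟩
  intro hcpos i l
  -- obstacle constraint in the limit
  have hobst : ∀ j : Fin d, j ≠ i → u j l - c ≤ u i l := by
    intro j hj
    by_contra hcon
    push_neg at hcon
    set δ : ℝ := u j l - c - u i l with hδ
    have hδpos : 0 < δ := by simp only [hδ]; linarith
    have hev : ∀ᶠ ρ : ℝ in atTop, ρ * π (δ/2) ≤ F (U ρ) i l := by
      have h1 := (htend j l).eventually
        (eventually_gt_nhds (show u j l - δ/2 < u j l by linarith))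
      filter_upwards [h1, eventually_ge_atTop (0:ℝ)] with ρ hρ1 hρ0
      have hui := hle ρ hρ0 i l
      have harg : δ/2 ≤ U ρ j l - c - U ρ i l := by linarith
      have hterm : π (δ/2) ≤ π (U ρ j l - c - U ρ i l) := hπm harg
      have hsum : π (U ρ j l - c - U ρ i l)
          ≤ ∑ k ∈ Finset.univ.erase i, π (U ρ k l - c - U ρ i l) :=
        Finset.single_le_sum (f := fun k => π (U ρ k l - c - U ρ i l)) (fun k _ => hπnn _)
          (Finset.mem_erase.2 ⟨hj, Finset.mem_univ j⟩)
      have e := hU ρ hρ0 i l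
      have hmul : ρ * π (δ/2) ≤ ρ * ∑ k ∈ Finset.univ.erase i, π (U ρ k l - c - U ρ i l) :=
        mul_le_mul_of_nonneg_left (hterm.trans hsum) hρ0
      linarith
    have h2 : Tendsto (fun ρ : ℝ => ρ * π (δ/2)) atTop atTop :=
      Tendsto.atTop_mul_const (hπpos _ (by linarith)) tendsto_id
    have h3 : Tendsto (fun ρ => F (U ρ) i l) atTop atTop :=
      tendsto_atTop_mono' atTop hev h2
    exact not_tendsto_atTop_of_tendsto_nhds (hFt i l) h3
  have hb : 0 ≤ F u i l := by
    refine ge_of_tendsto (hFt i l) ?_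
    filter_upwards [eventually_ge_atTop (0:ℝ)] with ρ hρ
    have e := hU ρ hρ i l
    have hnn : 0 ≤ ρ * ∑ k ∈ Finset.univ.erase i, π (U ρ k l - c - U ρ i l) :=
      mul_nonneg hρ (Finset.sum_nonneg fun k _ => hπnn _)
    linarith
  haveI hsub : Nonempty {j : Fin d // j ≠ i} := by
    obtain ⟨j, hj⟩ := Fintype.exists_ne_of_one_lt_card
      (by simp only [Fintype.card_fin]; omega) i
    exact ⟨⟨j, hj⟩⟩
  have hMle : Mop c u i l ≤ u i l := ciSup_le fun j => hobst j.1 j.2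
  rcases eq_or_lt_of_le hMle with heq | hlt
  · rw [show u i l - Mop c u i l = 0 by linarith]
    exact min_eq_right hb
  · have hη : 0 < u i l - Mop c u i l := by linarith
    have hev0 : ∀ᶠ ρ : ℝ in atTop, F (U ρ) i l = 0 := by
      have h1 := (htend i l).eventually
        (eventually_gt_nhds (show u i l - (u i l - Mop c u i l) < u i l by linarith))
      filter_upwards [h1, eventually_ge_atTop (0:ℝ)] with ρ hρ1 hρ0
      have e := hU ρ hρ0 i l
      have hz : ∑ k ∈ Finset.univ.erase i, π (U ρ k l - c - U ρ i l) = 0 := by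
        refine Finset.sum_eq_zero fun k hk => hπ0 _ ?_
        have hk' : k ≠ i := (Finset.mem_erase.1 hk).1
        have h2 : u k l - c ≤ Mop c u i l := by
          rw [Mop]
          exact le_ciSup (f := fun j : {j : Fin d // j ≠ i} => u j.1 l - c)
            (Set.Finite.bddAbove (Set.finite_range _)) ⟨k, hk'⟩
        have h3 : U ρ k l ≤ u k l := hle ρ hρ0 k l
        linarith
      rw [hz, mul_zero, sub_zero] at e
      exact e
    have hF0 : F u i l = 0 :=
      tendsto_nhds_unique (hFt i l)
        (Tendsto.congr' (hev0.mono fun ρ h => h.symm) tendsto_const_nhds)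
    rw [hF0]
    exact min_eq_left (by linarith)
end
end

section
/- Existence and uniqueness of strict supersolutions: let c > 0 and 0 < κ < c. Then there exists a unique w ∈ ℝ^{N×d} such that min(F_i(w)_l, w^i_l − (M_i w)_l) = κ for all i ∈ I and l ∈ {1,…,N}, and this w satisfies ‖w‖ ≤ (‖F(0)‖ + κ)/γ. -/
open Filter Topology

noncomputable section

/-! ### Auxiliary material -/

/-- Replace the `(i,l)` component of `w` by `t`. -/
def updOne {N d : ℕ} (w : Fin d → Fin N → ℝ) (i : Fin d) (l : Fin N) (t : ℝ) :
    Fin d → Fin N → ℝ :=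
  fun j k => if j = i ∧ k = l then t else w j k

lemma updOne_apply {N d : ℕ} (w : Fin d → Fin N → ℝ) (i : Fin d) (l : Fin N) (t : ℝ) :
    updOne w i l t i l = t := by simp [updOne]

lemma updOne_self {N d : ℕ} (w : Fin d → Fin N → ℝ) (i : Fin d) (l : Fin N) :
    updOne w i l (w i l) = w := by
  funext j k
  unfold updOne
  split_ifs with h
  · rw [h.1, h.2]
  · rfl

lemma Mop_le_of_ne {N d : ℕ} (c : ℝ) (u : Fin d → Fin N → ℝ) {i j : Fin d} (l : Fin N)
    (hj : j ≠ i) : u j l - c ≤ Mop c u i l := by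
  have := le_ciSup (f := fun j : {j : Fin d // j ≠ i} => u j.1 l - c)
    (Set.Finite.bddAbove (Set.finite_range _)) ⟨j, hj⟩
  simpa [Mop] using this

lemma nonempty_ne {d : ℕ} (hd : 2 ≤ d) (i : Fin d) : Nonempty {j : Fin d // j ≠ i} := by
  obtain ⟨b, hb⟩ := Fintype.exists_ne_of_one_lt_card (by simp; omega) i
  exact ⟨⟨b, hb⟩⟩

lemma Mop_exists {N d : ℕ} (hd : 2 ≤ d) (c : ℝ) (u : Fin d → Fin N → ℝ) (i : Fin d)
    (l : Fin N) : ∃ j : Fin d, j ≠ i ∧ Mop c u i l = u j l - c := by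
  haveI := nonempty_ne hd i
  obtain ⟨j0, hj0⟩ := Finite.exists_max (fun j : {j : Fin d // j ≠ i} => u j.1 l - c)
  refine ⟨j0.1, j0.2, le_antisymm ?_ ?_⟩
  · exact ciSup_le hj0
  · have := le_ciSup (f := fun j : {j : Fin d // j ≠ i} => u j.1 l - c)
      (Set.Finite.bddAbove (Set.finite_range _)) j0
    simpa [Mop] using this

lemma Mop_mono {N d : ℕ} (hd : 2 ≤ d) (c : ℝ) {u v : Fin d → Fin N → ℝ}
    (h : ∀ j k, u j k ≤ v j k) (i : Fin d) (l : Fin N) : Mop c u i l ≤ Mop c v i l := by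
  haveI := nonempty_ne hd i
  refine ciSup_le fun j => ?_
  exact le_trans (by linarith [h j.1 l]) (Mop_le_of_ne c v l j.2)

lemma Mop_const {N d : ℕ} (hd : 2 ≤ d) (c R : ℝ) (i : Fin d) (l : Fin N) :
    Mop c (fun _ _ => R) i l = R - c := by
  haveI := nonempty_ne hd i
  unfold Mop
  exact ciSup_const

/-- Comparison/uniqueness for solutions of the strict supersolution equation. -/
lemma strict_sol_le {N d : ℕ} (hN : 1 ≤ N) (hd : 2 ≤ d)
    {γ : ℝ} (hγ : 0 < γ) {F : (Fin d → Fin N → ℝ) → Fin d → Fin N → ℝ}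
    (hFmono : IsMonotoneSystem γ F) {c κ : ℝ} (hκc : κ < c)
    {u v : Fin d → Fin N → ℝ}
    (hu : ∀ i l, min (F u i l) (u i l - Mop c u i l) = κ)
    (hv : ∀ i l, min (F v i l) (v i l - Mop c v i l) = κ) :
    ∀ i l, u i l ≤ v i l := by
  by_contra hcon
  push_neg at hcon
  obtain ⟨i0, l0, h0⟩ := hcon
  haveI : Nonempty (Fin N) := ⟨⟨0, hN⟩⟩
  haveI : Nonempty (Fin d) := ⟨⟨0, by omega⟩⟩
  obtain ⟨p0, hp0⟩ := Finite.exists_max (fun p : Fin d × Fin N => u p.1 p.2 - v p.1 p.2)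
  set m := u p0.1 p0.2 - v p0.1 p0.2 with hm
  have hmpos : 0 < m := lt_of_lt_of_le (by linarith) (hp0 (i0, l0))
  haveI : Nonempty {q : Fin d × Fin N // u q.1 q.2 - v q.1 q.2 = m} :=
    ⟨⟨p0, rfl⟩⟩
  obtain ⟨⟨⟨i, l⟩, hp⟩, hmax⟩ := Finite.exists_max
    (fun q : {q : Fin d × Fin N // u q.1 q.2 - v q.1 q.2 = m} => u q.1.1 q.1.2)
  simp only at hp hmax
  have hui := hu i l
  have hvi := hv i l
  have hFv : κ ≤ F v i l := hvi ▸ min_le_left _ _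
  have hvM : κ ≤ v i l - Mop c v i l := hvi ▸ min_le_right _ _
  rcases le_or_gt (F u i l) (u i l - Mop c u i l) with hle | hlt
  · -- F u i l = κ
    have hFu : F u i l = κ := by rw [← hui, min_eq_left hle]
    have hF := hFmono u v i l (fun j k => by
        have h := hp0 (j, k); simp only at h; linarith [hp]) (by linarith [hp])
    rw [hp] at hF
    linarith [mul_pos hγ hmpos]
  · -- u i l - Mop c u i l = κ
    have hMu : u i l - Mop c u i l = κ := by rw [← hui, min_eq_right hlt.le]
    obtain ⟨j, hji, hj⟩ := Mop_exists hd c u i l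
    have h1 : u i l - (u j l - c) = κ := by rw [← hj]; exact hMu
    have h2 : v j l - c ≤ Mop c v i l := Mop_le_of_ne c v l hji
    -- v i l - (v j l - c) ≥ κ
    have h3 : κ ≤ v i l - (v j l - c) := by linarith
    have h4 : m ≤ u j l - v j l := by linarith
    have h5 : u j l - v j l = m :=
      le_antisymm (by have := hp0 (j, l); simpa using this) h4
    have h6 : u j l ≤ u i l := by simpa using hmax ⟨(j, l), h5⟩
    -- u j l = u i l + (c - κ) > u i l
    linarith

/-- Existence and uniqueness of strict supersolutions with parameter `κ ∈ (0, c)`. -/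
theorem strict_supersolution_exists_unique {N d : ℕ} (hN : 1 ≤ N) (hd : 2 ≤ d)
    (γ : ℝ) (hγ : 0 < γ)
    (F : (Fin d → Fin N → ℝ) → Fin d → Fin N → ℝ)
    (hFcont : Continuous F) (hFmono : IsMonotoneSystem γ F)
    (c : ℝ) (hc : 0 < c) (κ : ℝ) (hκ0 : 0 < κ) (hκc : κ < c) :
    ∃ w : Fin d → Fin N → ℝ,
      (∀ i l, min (F w i l) (w i l - Mop c w i l) = κ) ∧
      supNorm w ≤ (supNorm (F 0) + κ) / γ ∧
      ∀ w' : Fin d → Fin N → ℝ,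
        (∀ i l, min (F w' i l) (w' i l - Mop c w' i l) = κ) → w' = w := by
  haveI : Nonempty (Fin N) := ⟨⟨0, hN⟩⟩
  haveI : Nonempty (Fin d) := ⟨⟨0, by omega⟩⟩
  set γ' : ℝ := min γ 1 with hγ'def
  have hγ'pos : 0 < γ' := lt_min hγ one_pos
  have hγ'γ : γ' ≤ γ := min_le_left _ _
  have hγ'1 : γ' ≤ 1 := min_le_right _ _
  -- the one-component function whose root defines the iteration operator
  set g : (Fin d → Fin N → ℝ) → Fin d → Fin N → ℝ → ℝ :=
    fun w i l t => min (F (updOne w i l t) i l) (t - Mop c w i l) with hgdef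
  -- strict monotonicity with gap γ'
  have hgap : ∀ w i l s t, s ≤ t → g w i l s + γ' * (t - s) ≤ g w i l t := by
    intro w i l s t hst
    have hd1 : ∀ j k, updOne w i l t j k - updOne w i l s j k
        ≤ updOne w i l t i l - updOne w i l s i l := by
      intro j k
      simp only [updOne]
      by_cases h : j = i ∧ k = l
      · simp [h]
      · simp [h]; linarith
    have hF := hFmono (updOne w i l t) (updOne w i l s) i l hd1
      (by rw [updOne_apply, updOne_apply]; linarith)
    rw [updOne_apply, updOne_apply] at hF
    simp only [hgdef]
    refine le_min ?_ ?_
    · have h1 : min (F (updOne w i l s) i l) (s - Mop c w i l)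
          ≤ F (updOne w i l s) i l := min_le_left _ _
      have h2 : γ' * (t - s) ≤ γ * (t - s) :=
        mul_le_mul_of_nonneg_right hγ'γ (by linarith)
      linarith
    · have h1 : min (F (updOne w i l s) i l) (s - Mop c w i l)
          ≤ s - Mop c w i l := min_le_right _ _
      have h2 : γ' * (t - s) ≤ 1 * (t - s) :=
        mul_le_mul_of_nonneg_right hγ'1 (by linarith)
      linarith
  -- continuity and existence of the root
  have hex : ∀ w i l, ∃ t, g w i l t = κ := by
    intro w i l
    have hu : Continuous (fun t : ℝ => updOne w i l t) := by
      refine continuous_pi fun j => continuous_pi fun k => ?_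
      by_cases h : j = i ∧ k = l
      · simpa [updOne, h] using continuous_id'
      · simpa [updOne, h] using continuous_const
    have hgc : Continuous (g w i l) := by
      simp only [hgdef]
      exact ((continuous_apply l).comp ((continuous_apply i).comp (hFcont.comp hu))).min
        (continuous_id.sub continuous_const)
    set K : ℝ := |κ - g w i l 0| / γ' with hK
    have hK0 : 0 ≤ K := div_nonneg (abs_nonneg _) hγ'pos.le
    have hγK : γ' * K = |κ - g w i l 0| := by
      rw [hK]; field_simp
    have e1 := hgap w i l (-K) 0 (by linarith)
    have e2 := hgap w i l 0 K hK0
    have h1 : g w i l (-K) ≤ κ := by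
      have := neg_abs_le (κ - g w i l 0)
      linarith
    have h2 : κ ≤ g w i l K := by
      have := le_abs_self (κ - g w i l 0)
      linarith
    obtain ⟨t, -, ht⟩ := intermediate_value_Icc (by linarith : -K ≤ K)
      hgc.continuousOn ⟨h1, h2⟩
    exact ⟨t, ht⟩
  -- root comparisons
  have hroot_le : ∀ w i l t r, g w i l t = κ → κ ≤ g w i l r → t ≤ r := by
    intro w i l t r ht hr
    by_contra h
    push_neg at h
    have := hgap w i l r t h.le
    nlinarith [mul_pos hγ'pos (sub_pos.2 h)]
  have hroot_ge : ∀ w i l t r, g w i l t = κ → g w i l r ≤ κ → r ≤ t := by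
    intro w i l t r ht hr
    by_contra h
    push_neg at h
    have := hgap w i l t r h.le
    nlinarith [mul_pos hγ'pos (sub_pos.2 h)]
  -- the operator T
  obtain ⟨T, hTspec⟩ : ∃ T : (Fin d → Fin N → ℝ) → Fin d → Fin N → ℝ,
      ∀ w i l, g w i l (T w i l) = κ :=
    ⟨fun w i l => (hex w i l).choose, fun w i l => (hex w i l).choose_spec⟩
  -- monotonicity of T
  have hTmono : ∀ u v : Fin d → Fin N → ℝ, (∀ j k, u j k ≤ v j k) →
      ∀ i l, T u i l ≤ T v i l := by
    intro u v huv i l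
    by_contra hcon
    push_neg at hcon
    have h1 := hTspec u i l
    have h2 := hTspec v i l
    simp only [hgdef] at h1 h2
    set t := T u i l
    set t' := T v i l
    have hb1 : κ ≤ F (updOne v i l t') i l := h2 ▸ min_le_left _ _
    have hb2 : κ ≤ t' - Mop c v i l := h2 ▸ min_le_right _ _
    have hdiff : ∀ j k, updOne u i l t j k - updOne v i l t' j k
        ≤ updOne u i l t i l - updOne v i l t' i l := by
      intro j k
      simp only [updOne]
      by_cases h : j = i ∧ k = l
      · simp [h]
      · simp [h]; linarith [huv j k]
    have hF := hFmono (updOne u i l t) (updOne v i l t') i l hdiff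
      (by rw [updOne_apply, updOne_apply]; linarith)
    rw [updOne_apply, updOne_apply] at hF
    have hM : Mop c u i l ≤ Mop c v i l := Mop_mono hd c huv i l
    have hA : κ + γ' * (t - t') ≤ F (updOne u i l t) i l := by
      have : γ' * (t - t') ≤ γ * (t - t') :=
        mul_le_mul_of_nonneg_right hγ'γ (by linarith)
      linarith
    have hB : κ + γ' * (t - t') ≤ t - Mop c u i l := by
      have : γ' * (t - t') ≤ 1 * (t - t') :=
        mul_le_mul_of_nonneg_right hγ'1 (by linarith)
      linarith
    have : κ + γ' * (t - t') ≤ κ := by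
      have hmin := le_min hA hB
      linarith
    nlinarith [mul_pos hγ'pos (sub_pos.2 hcon)]
  -- a priori bounds
  set R : ℝ := (supNorm (F 0) + κ) / γ with hRdef
  have hsupF : ∀ i l, |F 0 i l| ≤ supNorm (F 0) := by
    intro i l
    have := le_ciSup (f := fun p : Fin d × Fin N => |F 0 p.1 p.2|)
      (Set.Finite.bddAbove (Set.finite_range _)) (i, l)
    simpa [supNorm] using this
  have hsupF0 : 0 ≤ supNorm (F 0) :=
    le_trans (abs_nonneg _) (hsupF (Classical.arbitrary _) (Classical.arbitrary _))
  have hRpos : 0 < R := div_pos (by linarith) hγ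
  have hγR : γ * R = supNorm (F 0) + κ := by rw [hRdef]; field_simp
  have hupdhi : updOne (fun _ _ => R) = fun (i : Fin d) (l : Fin N) (t : ℝ) =>
      updOne (fun _ _ => R) i l t := rfl
  -- T maps the box into itself (at the constant functions)
  have hThi : ∀ i l, T (fun _ _ => R) i l ≤ R := by
    intro i l
    refine hroot_le _ i l _ R (hTspec _ i l) ?_
    have hconst : updOne (fun _ _ => R) i l R = (fun _ _ => R) := by
      funext j k; simp only [updOne]; split_ifs <;> rfl
    simp only [hgdef, hconst, Mop_const hd c R i l]
    have hF := hFmono (fun _ _ => R) 0 i l (fun j k => by simp) (by simp [hRpos.le])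
    simp only [Pi.zero_apply, sub_zero] at hF
    refine le_min ?_ (by linarith)
    have := hsupF i l
    have := neg_abs_le (F 0 i l)
    simp only [Pi.zero_apply] at *
    nlinarith
  have hTlo : ∀ i l, -R ≤ T (fun _ _ => -R) i l := by
    intro i l
    refine hroot_ge _ i l _ (-R) (hTspec _ i l) ?_
    have hconst : updOne (fun _ _ => -R) i l (-R) = (fun _ _ => -R) := by
      funext j k; simp only [updOne]; split_ifs <;> rfl
    simp only [hgdef, hconst]
    have hF := hFmono 0 (fun _ _ => -R) i l (fun j k => by simp) (by simp [hRpos.le])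
    simp only [Pi.zero_apply, zero_sub, sub_neg_eq_add] at hF
    refine le_trans (min_le_left _ _) ?_
    have := hsupF i l
    have := le_abs_self (F 0 i l)
    simp only [Pi.zero_apply] at *
    nlinarith
  -- Knaster–Tarski: the set of subsolutions
  set S : Set (Fin d → Fin N → ℝ) :=
    {w | (∀ i l, -R ≤ w i l ∧ w i l ≤ R) ∧ ∀ i l, w i l ≤ T w i l} with hSdef
  have hloS : (fun _ _ => -R) ∈ S := by
    constructor
    · intro i l
      have h1 : (-R : ℝ) ≤ -R := le_refl _
      have h2 : (-R : ℝ) ≤ R := by linarith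
      exact ⟨h1, h2⟩
    · exact hTlo
  have hSne : ∀ i : Fin d, ∀ l : Fin N, ((fun w : Fin d → Fin N → ℝ => w i l) '' S).Nonempty :=
    fun i l => ⟨_, Set.mem_image_of_mem _ hloS⟩
  have hSbdd : ∀ i : Fin d, ∀ l : Fin N,
      BddAbove ((fun w : Fin d → Fin N → ℝ => w i l) '' S) := by
    intro i l
    refine ⟨R, fun x hx => ?_⟩
    obtain ⟨w, hw, rfl⟩ := hx
    exact (hw.1 i l).2
  set wstar : Fin d → Fin N → ℝ :=
    fun i l => sSup ((fun w : Fin d → Fin N → ℝ => w i l) '' S) with hwdef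
  have hle_wstar : ∀ w ∈ S, ∀ i l, w i l ≤ wstar i l := by
    intro w hw i l
    exact le_csSup (hSbdd i l) (Set.mem_image_of_mem _ hw)
  have hwstar_le_R : ∀ i l, wstar i l ≤ R := by
    intro i l
    refine csSup_le (hSne i l) fun x hx => ?_
    obtain ⟨w, hw, rfl⟩ := hx
    exact (hw.1 i l).2
  have hlo_le_wstar : ∀ i l, -R ≤ wstar i l :=
    fun i l => hle_wstar _ hloS i l
  have hwstar_le_T : ∀ i l, wstar i l ≤ T wstar i l := by
    intro i l
    refine csSup_le (hSne i l) fun x hx => ?_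
    obtain ⟨w, hw, rfl⟩ := hx
    exact le_trans (hw.2 i l) (hTmono w wstar (fun j k => hle_wstar w hw j k) i l)
  have hTwstarS : T wstar ∈ S := by
    constructor
    · intro i l
      constructor
      · exact le_trans (hlo_le_wstar i l) (le_trans (hwstar_le_T i l) (le_refl _))
      · exact le_trans (hTmono wstar (fun _ _ => R)
          (fun j k => hwstar_le_R j k) i l) (hThi i l)
    · intro i l
      exact hTmono wstar (T wstar) hwstar_le_T i l
  have hfix : ∀ i l, T wstar i l = wstar i l :=
    fun i l => le_antisymm (hle_wstar _ hTwstarS i l) (hwstar_le_T i l)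
  -- wstar solves the equation
  have hsol : ∀ i l, min (F wstar i l) (wstar i l - Mop c wstar i l) = κ := by
    intro i l
    have h := hTspec wstar i l
    simp only [hgdef] at h
    rw [hfix i l, updOne_self] at h
    exact h
  refine ⟨wstar, hsol, ?_, ?_⟩
  · -- sup-norm bound
    refine ciSup_le fun p => ?_
    rw [abs_le]
    exact ⟨hlo_le_wstar p.1 p.2, hwstar_le_R p.1 p.2⟩
  · -- uniqueness
    intro w' hw'
    funext i l
    exact le_antisymm (strict_sol_le hN hd hγ hFmono hκc hw' hsol i l)
      (strict_sol_le hN hd hγ hFmono hκc hsol hw' i l)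
end
end

section
/- Comparison principle for the obstacle problem with a fixed obstacle: let c be a switching cost and fix w ∈ ℝ^{N×d}. If u ∈ ℝ^{N×d} satisfies min(F_i(u)_l, u^i_l − (M_i w)_l) ≤ 0 for all i ∈ I and l ∈ {1,…,N}, and v ∈ ℝ^{N×d} satisfies min(F_i(v)_l, v^i_l − (M_i w)_l) ≥ 0 for all i ∈ I and l ∈ {1,…,N}, then u ≤ v componentwise. -/
open Filter Topology

noncomputable section

/-- Comparison principle for the obstacle problem with a fixed obstacle `M_i w`. -/
theorem obstacle_comparison {N d : ℕ} (hN : 1 ≤ N) (hd : 2 ≤ d)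
    (γ : ℝ) (hγ : 0 < γ)
    (F : (Fin d → Fin N → ℝ) → Fin d → Fin N → ℝ)
    (hFcont : Continuous F) (hFmono : IsMonotoneSystem γ F)
    (c : ℝ) (w : Fin d → Fin N → ℝ)
    (u v : Fin d → Fin N → ℝ)
    (hu : ∀ i l, min (F u i l) (u i l - Mop c w i l) ≤ 0)
    (hv : ∀ i l, 0 ≤ min (F v i l) (v i l - Mop c w i l)) :
    ∀ i l, u i l ≤ v i l := by
  by_contra h
  push_neg at h
  obtain ⟨i0, l0, h0⟩ := h
  have hne : Nonempty (Fin d × Fin N) := ⟨(i0, l0)⟩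
  obtain ⟨⟨i, l⟩, hmax⟩ := Finite.exists_max (fun p : Fin d × Fin N => u p.1 p.2 - v p.1 p.2)
  have hm : 0 < u i l - v i l := lt_of_lt_of_le (by linarith) (hmax (i0, l0))
  have hF := hFmono u v i l (fun j k => hmax (j, k)) hm.le
  have h1 : 0 ≤ F v i l := le_trans (hv i l) (min_le_left _ _)
  have h2 : Mop c w i l ≤ v i l := by
    have := le_trans (hv i l) (min_le_right _ _); linarith
  have h3 : 0 < F u i l := by nlinarith
  rcases min_le_iff.mp (hu i l) with h4 | h4
  · linarith
  · linarith
end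
end

section
/- Contraction property of the iterated optimal stopping operator: suppose F is concave, let c > 0, κ ∈ (0, c), and let w be the strict supersolution with parameter κ, i.e., min(F_i(w)_l, w^i_l − (M_i w)_l) = κ for all i ∈ I, l ∈ {1,…,N}. Let (u^m)_{m≥0} be the iterated optimal stopping sequence for switching cost c. If for some n ≥ 1 and some λ ∈ [0,1] one has u^n − u^{n−1} ≤ λ(w − u^{n−1}) componentwise, then u^{n+1} − u^n ≤ λ(1 − μ)(w − u^n) componentwise, where μ = min(1, γκ/(2‖F(0)‖ + κ)). -/
open Filter Topology

noncomputable section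

lemma mop_le {N d : ℕ} (hd : 2 ≤ d) {c b : ℝ} {u : Fin d → Fin N → ℝ} {i : Fin d} {l : Fin N}
    (h : ∀ j : Fin d, j ≠ i → u j l - c ≤ b) : Mop c u i l ≤ b := by
  have := nonempty_ne hd i
  exact ciSup_le fun j => h j j.2

lemma le_mop {N d : ℕ} {c : ℝ} (u : Fin d → Fin N → ℝ) (i : Fin d) (l : Fin N)
    (j : Fin d) (hj : j ≠ i) : u j l - c ≤ Mop c u i l := by
  have h := le_ciSup (f := fun j' : {j' : Fin d // j' ≠ i} => u j' l - c)
    (Set.Finite.bddAbove (Set.finite_range _)) ⟨j, hj⟩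
  simpa [Mop] using h

lemma comparison {N d : ℕ} (hN : 1 ≤ N) (hd : 2 ≤ d) {γ : ℝ} (hγ : 0 < γ)
    {F : (Fin d → Fin N → ℝ) → Fin d → Fin N → ℝ}
    (hFmono : IsMonotoneSystem γ F)
    (ψ a b : Fin d → Fin N → ℝ)
    (ha : ∀ i l, min (F a i l) (a i l - ψ i l) ≤ 0)
    (hb : ∀ i l, 0 ≤ min (F b i l) (b i l - ψ i l)) :
    ∀ i l, a i l ≤ b i l := by
  have hdne : Nonempty (Fin d) := ⟨⟨0, by omega⟩⟩
  have hNne : Nonempty (Fin N) := ⟨⟨0, by omega⟩⟩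
  obtain ⟨⟨i0, l0⟩, hmax⟩ := Finite.exists_max (fun p : Fin d × Fin N => a p.1 p.2 - b p.1 p.2)
  intro i l
  by_contra hcon
  push_neg at hcon
  have hm : 0 < a i0 l0 - b i0 l0 := lt_of_lt_of_le (by linarith) (hmax (i, l))
  have hFb : 0 ≤ F b i0 l0 := le_trans (hb i0 l0) (min_le_left _ _)
  have hψb : 0 ≤ b i0 l0 - ψ i0 l0 := le_trans (hb i0 l0) (min_le_right _ _)
  rcases min_le_iff.mp (ha i0 l0) with hFa | haψ
  · have hmono := hFmono a b i0 l0 (fun j k => hmax (j, k)) hm.le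
    nlinarith [mul_pos hγ hm]
  · linarith

/-- Contraction property of the iterated optimal stopping operator. -/
theorem iterated_optimal_stopping_contraction {N d : ℕ} (hN : 1 ≤ N) (hd : 2 ≤ d)
    (γ : ℝ) (hγ : 0 < γ)
    (F : (Fin d → Fin N → ℝ) → Fin d → Fin N → ℝ)
    (hFcont : Continuous F) (hFmono : IsMonotoneSystem γ F)
    (hFconc : IsConcaveSystem F)
    (c : ℝ) (hc : 0 < c) (κ : ℝ) (hκ0 : 0 < κ) (hκc : κ < c)
    (w : Fin d → Fin N → ℝ)
    (hw : ∀ i l, min (F w i l) (w i l - Mop c w i l) = κ)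
    (U : ℕ → Fin d → Fin N → ℝ)
    (hU0 : ∀ i l, F (U 0) i l = 0)
    (hUn : ∀ m : ℕ, ∀ i l, min (F (U (m + 1)) i l) (U (m + 1) i l - Mop c (U m) i l) = 0)
    (n : ℕ) (lam : ℝ) (hlam0 : 0 ≤ lam) (hlam1 : lam ≤ 1)
    (hstep : ∀ i l, U (n + 1) i l - U n i l ≤ lam * (w i l - U n i l)) :
    ∀ i l, U (n + 2) i l - U (n + 1) i l ≤
      lam * (1 - min 1 (γ * κ / (2 * supNorm (F 0) + κ))) * (w i l - U (n + 1) i l) := by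
  have hdne : Nonempty (Fin d) := ⟨⟨0, by omega⟩⟩
  have hNne : Nonempty (Fin N) := ⟨⟨0, by omega⟩⟩
  set K := supNorm (F 0) with hKdef
  have hKb : ∀ (i : Fin d) (l : Fin N), |F 0 i l| ≤ K := by
    intro i l
    rw [hKdef]
    have h := le_ciSup (f := fun p : Fin d × Fin N => |F 0 p.1 p.2|)
      (Set.Finite.bddAbove (Set.finite_range _)) (i, l)
    simpa [supNorm] using h
  have hK0 : 0 ≤ K :=
    le_trans (abs_nonneg _) (hKb (Classical.arbitrary _) (Classical.arbitrary _))
  set μ := min 1 (γ * κ / (2 * K + κ)) with hμdef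
  have hKκ : 0 < 2 * K + κ := by linarith
  have hμpos : 0 < μ := lt_min one_pos (div_pos (mul_pos hγ hκ0) hKκ)
  have hμ1 : μ ≤ 1 := min_le_left _ _
  have hμr : μ ≤ γ * κ / (2 * K + κ) := min_le_right _ _
  have hFw : ∀ i l, κ ≤ F w i l := by
    intro i l
    have h := min_le_left (F w i l) (w i l - Mop c w i l)
    rw [hw i l] at h; exact h
  have hwM : ∀ i l, κ ≤ w i l - Mop c w i l := by
    intro i l
    have h := min_le_right (F w i l) (w i l - Mop c w i l)
    rw [hw i l] at h; exact h
  have hFU1 : ∀ i l, 0 ≤ F (U (n + 1)) i l := by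
    intro i l
    have h := min_le_left (F (U (n + 1)) i l) (U (n + 1) i l - Mop c (U n) i l)
    rw [hUn n i l] at h; exact h
  have hU1M : ∀ i l, 0 ≤ U (n + 1) i l - Mop c (U n) i l := by
    intro i l
    have h := min_le_right (F (U (n + 1)) i l) (U (n + 1) i l - Mop c (U n) i l)
    rw [hUn n i l] at h; exact h
  -- upper bound on w : γ w ≤ κ + K
  have hwup : ∀ i l, γ * w i l ≤ κ + K := by
    obtain ⟨⟨i1, l1⟩, hmax⟩ := Finite.exists_max (fun p : Fin d × Fin N => w p.1 p.2)
    intro i l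
    have hle : w i l ≤ w i1 l1 := hmax (i, l)
    rcases le_or_gt (w i1 l1) 0 with h0 | h0
    · nlinarith [mul_le_mul_of_nonneg_left hle hγ.le,
        mul_le_mul_of_nonneg_left h0 hγ.le]
    · have hMw : Mop c w i1 l1 ≤ w i1 l1 - c := by
        refine mop_le hd fun j _ => ?_
        have h : w j l1 ≤ w i1 l1 := hmax (j, l1)
        linarith
      have hFweq : F w i1 l1 = κ := by
        have hmin := hw i1 l1
        rcases le_total (F w i1 l1) (w i1 l1 - Mop c w i1 l1) with h | h
        · rwa [min_eq_left h] at hmin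
        · rw [min_eq_right h] at hmin; linarith
      have hmono := hFmono w 0 i1 l1 (fun j k => by simpa using hmax (j, k))
        (by simpa using h0.le)
      simp only [Pi.zero_apply, sub_zero] at hmono
      rw [hFweq] at hmono
      have habs := abs_le.mp (hKb i1 l1)
      nlinarith [mul_le_mul_of_nonneg_left hle hγ.le]
  -- lower bound on U 0 : -K ≤ γ U0
  have hu0low : ∀ i l, -K ≤ γ * U 0 i l := by
    obtain ⟨⟨i1, l1⟩, hmax⟩ := Finite.exists_max (fun p : Fin d × Fin N => -U 0 p.1 p.2)
    intro i l
    have hle : -U 0 i l ≤ -U 0 i1 l1 := hmax (i, l)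
    rcases le_or_gt (-U 0 i1 l1) 0 with h0 | h0
    · nlinarith [mul_nonneg hγ.le (show (0:ℝ) ≤ U 0 i l by linarith)]
    · have hmono := hFmono 0 (U 0) i1 l1 (fun j k => by simpa using hmax (j, k))
        (by simpa using h0.le)
      simp only [Pi.zero_apply, zero_sub] at hmono
      rw [hU0 i1 l1] at hmono
      have habs := abs_le.mp (hKb i1 l1)
      nlinarith [mul_le_mul_of_nonneg_left hle hγ.le]
  -- U 0 ≤ U (n+1)
  have hu01 : ∀ i l, U 0 i l ≤ U (n + 1) i l := by
    refine comparison hN hd hγ hFmono (Mop c (U n)) _ _ ?_ ?_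
    · intro i l
      exact le_trans (min_le_left _ _) (le_of_eq (hU0 i l))
    · intro i l; exact (hUn n i l).ge
  -- key estimate : μ (w - U^{n+1}) ≤ κ
  have hμw : ∀ i l, μ * (w i l - U (n + 1) i l) ≤ κ := by
    intro i l
    have hx : γ * (w i l - U (n + 1) i l) ≤ 2 * K + κ := by
      have h1 := hwup i l
      have h2 := hu0low i l
      have h3 : γ * U 0 i l ≤ γ * U (n + 1) i l :=
        mul_le_mul_of_nonneg_left (hu01 i l) hγ.le
      nlinarith
    rcases le_or_gt (w i l - U (n + 1) i l) 0 with h | h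
    · nlinarith [mul_le_mul_of_nonneg_left h hμpos.le]
    · have h4 : μ * (w i l - U (n + 1) i l) ≤
          γ * κ / (2 * K + κ) * (w i l - U (n + 1) i l) :=
        mul_le_mul_of_nonneg_right hμr h.le
      have h5 : γ * κ / (2 * K + κ) * (w i l - U (n + 1) i l) ≤ κ := by
        rw [div_mul_eq_mul_div, div_le_iff₀ hKκ]
        nlinarith [mul_le_mul_of_nonneg_left hx hκ0.le]
      linarith
  set ρ := lam * (1 - μ) with hρdef
  have hρ0 : 0 ≤ ρ := mul_nonneg hlam0 (by linarith)
  have hρ1 : ρ ≤ 1 := by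
    have h := mul_le_mul hlam1 (show 1 - μ ≤ 1 by linarith) (by linarith) zero_le_one
    linarith
  -- U^{n+2} ≤ ρ w + (1 - ρ) U^{n+1}
  have hvb : ∀ i l, U (n + 2) i l ≤ ρ * w i l + (1 - ρ) * U (n + 1) i l := by
    refine comparison hN hd hγ hFmono (Mop c (U (n + 1))) (U (n + 2))
      (fun j k => ρ * w j k + (1 - ρ) * U (n + 1) j k) ?_ ?_
    · intro i l; exact (hUn (n + 1) i l).le
    · intro i l
      refine le_min ?_ ?_
      · have hconc := hFconc i w (U (n + 1)) ρ hρ0 hρ1 l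
        have h1 : ρ * κ ≤ ρ * F w i l := mul_le_mul_of_nonneg_left (hFw i l) hρ0
        have h2 : 0 ≤ (1 - ρ) * F (U (n + 1)) i l :=
          mul_nonneg (by linarith) (hFU1 i l)
        have h3 : 0 ≤ ρ * κ := mul_nonneg hρ0 hκ0.le
        linarith [hconc]
      · rw [sub_nonneg]
        refine mop_le hd fun j hj => ?_
        show U (n + 1) j l - c ≤ ρ * w i l + (1 - ρ) * U (n + 1) i l
        have hb1 : U n j l - c ≤ U (n + 1) i l :=
          le_trans (le_mop (U n) i l j hj) (by linarith [hU1M i l])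
        have hc1 : w j l - c ≤ w i l - κ := by
          linarith [le_mop (c := c) w i l j hj, hwM i l]
        have hs := hstep j l
        have h5 : (1 - lam) * (U n j l - c) ≤ (1 - lam) * U (n + 1) i l :=
          mul_le_mul_of_nonneg_left hb1 (by linarith)
        have h6 : lam * (w j l - c) ≤ lam * (w i l - κ) :=
          mul_le_mul_of_nonneg_left hc1 hlam0
        have h7 : lam * (μ * (w i l - U (n + 1) i l)) ≤ lam * κ :=
          mul_le_mul_of_nonneg_left (hμw i l) hlam0
        rw [hρdef]
        nlinarith [h5, h6, h7, hs]
  intro i l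
  have h := hvb i l
  nlinarith [h]
end
end

section
/- Exactness of the penalty scheme for large switching cost: suppose c > 2‖F(0)‖/γ. Let u be the solution of the QVI with switching cost c and, for each ρ ≥ 0, let u^ρ be the solution of the penalized equation with penalty parameter ρ and switching cost c. Then u^ρ = u for all ρ ≥ 0. -/
open Filter Topology

noncomputable section

/-- existence of a maximizing pair -/
lemma exists_max_pair {N d : ℕ} (hN : 1 ≤ N) (hd : 2 ≤ d) (w : Fin d → Fin N → ℝ) :
    ∃ i l, ∀ j k, w j k ≤ w i l := by
  haveI : Nonempty (Fin d × Fin N) := ⟨(⟨0, by omega⟩, ⟨0, by omega⟩)⟩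
  obtain ⟨⟨i, l⟩, h⟩ := Finite.exists_max (fun p : Fin d × Fin N => w p.1 p.2)
  exact ⟨i, l, fun j k => h (j, k)⟩

/-- uniqueness of zeros of a monotone system -/
lemma zero_unique {N d : ℕ} (hN : 1 ≤ N) (hd : 2 ≤ d) {γ : ℝ} (hγ : 0 < γ)
    {F : (Fin d → Fin N → ℝ) → Fin d → Fin N → ℝ} (hFmono : IsMonotoneSystem γ F)
    {v w : Fin d → Fin N → ℝ} (hv : ∀ i l, F v i l = 0) (hw : ∀ i l, F w i l = 0) :
    v = w := by
  have key : ∀ (a b : Fin d → Fin N → ℝ), (∀ i l, F a i l = 0) → (∀ i l, F b i l = 0) →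
      ∀ i l, a i l ≤ b i l := by
    intro a b ha hb i l
    obtain ⟨i₀, l₀, hmax⟩ := exists_max_pair hN hd (fun j k => a j k - b j k)
    by_cases h : 0 ≤ a i₀ l₀ - b i₀ l₀
    · have h1 := hFmono a b i₀ l₀ (fun j k => hmax j k) h
      rw [ha, hb] at h1
      nlinarith [hmax i l]
    · nlinarith [hmax i l]
  funext i l
  exact le_antisymm (key v w hv hw i l) (key w v hw hv i l)

/-- a priori bound from monotonicity -/
lemma bound_lemma {N d : ℕ} (hN : 1 ≤ N) (hd : 2 ≤ d) {γ : ℝ} (hγ : 0 < γ)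
    {F : (Fin d → Fin N → ℝ) → Fin d → Fin N → ℝ} (hFmono : IsMonotoneSystem γ F)
    {S : ℝ} (hS : ∀ i l, |F 0 i l| ≤ S)
    (w : Fin d → Fin N → ℝ)
    (h0 : ∀ i l, 0 ≤ F w i l)
    (hmaxz : ∀ i l, (∀ j k, w j k ≤ w i l) → F w i l ≤ 0) :
    ∀ i l, w i l ≤ S / γ ∧ -(S / γ) ≤ w i l := by
  have hS0 : 0 ≤ S := le_trans (abs_nonneg _) (hS ⟨0, by omega⟩ ⟨0, by omega⟩)
  have hSdiv : 0 ≤ S / γ := div_nonneg hS0 hγ.le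
  intro i l
  constructor
  · obtain ⟨i₀, l₀, hmax⟩ := exists_max_pair hN hd w
    have hle : w i l ≤ w i₀ l₀ := hmax i l
    by_cases h : 0 ≤ w i₀ l₀
    · have h1 := hFmono w 0 i₀ l₀
        (fun j k => by simpa using hmax j k) (by simpa using h)
      simp only [Pi.zero_apply, sub_zero] at h1
      have h2 := hmaxz i₀ l₀ hmax
      have h3 := (abs_le.mp (hS i₀ l₀)).1
      rw [le_div_iff₀ hγ]
      nlinarith
    · linarith [le_of_not_ge h]
  · obtain ⟨i₁, l₁, hmin⟩ := exists_max_pair hN hd (fun j k => - w j k)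
    have hle : - w i l ≤ - w i₁ l₁ := hmin i l
    by_cases h : 0 ≤ - w i₁ l₁
    · have h1 := hFmono 0 w i₁ l₁
        (fun j k => by simpa using hmin j k) (by simpa using h)
      simp only [Pi.zero_apply, zero_sub] at h1
      have h2 := h0 i₁ l₁
      have h3 := (abs_le.mp (hS i₁ l₁)).2
      rw [neg_le, ← sub_nonneg]
      have hw1 : γ * (- w i₁ l₁) ≤ S := by linarith
      have : - w i₁ l₁ ≤ S / γ := by rw [← le_div_iff₀' hγ] at hw1; exact hw1
      linarith
    · have : 0 < w i₁ l₁ := by linarith [lt_of_not_ge h]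
      nlinarith
/-- Exactness of the penalty scheme for large switching cost `c > 2‖F(0)‖/γ`. -/
theorem penalty_exact_for_large_cost {N d : ℕ} (hN : 1 ≤ N) (hd : 2 ≤ d)
    (γ : ℝ) (hγ : 0 < γ)
    (F : (Fin d → Fin N → ℝ) → Fin d → Fin N → ℝ)
    (hFcont : Continuous F) (hFmono : IsMonotoneSystem γ F)
    (π : ℝ → ℝ) (hπ : IsPenaltyFunction π)
    (c : ℝ) (hc : 2 * supNorm (F 0) / γ < c)
    (u : Fin d → Fin N → ℝ)
    (hu : ∀ i l, min (F u i l) (u i l - Mop c u i l) = 0)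
    (U : ℝ → Fin d → Fin N → ℝ)
    (hU : ∀ ρ : ℝ, 0 ≤ ρ → ∀ i l,
      F (U ρ) i l - ρ * ∑ j ∈ Finset.univ.erase i, π (U ρ j l - c - U ρ i l) = 0) :
    ∀ ρ : ℝ, 0 ≤ ρ → U ρ = u := by
  obtain ⟨hπc, hπm, hπ0, hπpos⟩ := hπ
  set S : ℝ := supNorm (F 0) with hSdef
  -- basic facts about S
  have hS : ∀ (i : Fin d) (l : Fin N), |F 0 i l| ≤ S := by
    intro i l
    have : |F 0 i l| = (fun p : Fin d × Fin N => |F 0 p.1 p.2|) (i, l) := rfl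
    rw [this, hSdef, supNorm]
    exact le_ciSup (f := fun p : Fin d × Fin N => |F 0 p.1 p.2|)
      (Set.Finite.bddAbove (Set.finite_range _)) (i, l)
  have hS0 : 0 ≤ S := le_trans (abs_nonneg _) (hS ⟨0, by omega⟩ ⟨0, by omega⟩)
  have hSdiv : 0 ≤ S / γ := div_nonneg hS0 hγ.le
  have h2S : 2 * S / γ = S / γ + S / γ := by ring
  have hc2 : S / γ + S / γ < c := by rw [← h2S]; exact hc
  have hcpos : 0 < c := lt_of_le_of_lt (by linarith) hc2
  -- nonemptiness of {j // j ≠ i}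
  haveI hntd : Nontrivial (Fin d) := ⟨⟨⟨0, by omega⟩, ⟨1, by omega⟩, by simp [Fin.ext_iff]⟩⟩
  have hne : ∀ i : Fin d, Nonempty {j : Fin d // j ≠ i} := by
    intro i
    obtain ⟨j, hj⟩ := exists_ne i
    exact ⟨⟨j, hj⟩⟩
  -- penalties are nonnegative
  have hπnn : ∀ y, 0 ≤ π y := by
    intro y
    rcases le_or_gt y 0 with h | h
    · rw [hπ0 y h]
    · exact (hπpos y h).le
  -- Step 1: F u = 0 everywhere.
  have huF0 : ∀ i l, 0 ≤ F u i l := by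
    intro i l
    have := min_le_left (F u i l) (u i l - Mop c u i l)
    rw [hu i l] at this
    exact this
  have huMop : ∀ i l, 0 ≤ u i l - Mop c u i l := by
    intro i l
    have := min_le_right (F u i l) (u i l - Mop c u i l)
    rw [hu i l] at this
    exact this
  have hu_alt : ∀ i l, F u i l = 0 ∨ u i l - Mop c u i l = 0 := by
    intro i l
    rcases min_eq_iff.mp (hu i l) with ⟨h, _⟩ | ⟨h, _⟩
    · exact Or.inl h
    · exact Or.inr h
  have hu_bd : ∀ i l, u i l ≤ S / γ ∧ -(S / γ) ≤ u i l := by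
    apply bound_lemma hN hd hγ hFmono hS u huF0
    intro i l hmax
    rcases hu_alt i l with h | h
    · exact h.le
    · exfalso
      haveI := hne i
      have hMle : Mop c u i l ≤ u i l - c := by
        apply ciSup_le
        intro j
        have := hmax j.1 l
        linarith
      linarith
  have huzero : ∀ i l, F u i l = 0 := by
    intro i l
    rcases hu_alt i l with h | h
    · exact h
    · exfalso
      haveI := hne i
      have hMle : Mop c u i l ≤ S / γ - c := by
        apply ciSup_le
        intro j
        have := (hu_bd j.1 l).1
        linarith
      have := (hu_bd i l).2
      linarith [h]
  -- Step 2: for each ρ ≥ 0, F (U ρ) = 0 everywhere.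
  intro ρ hρ
  set w : Fin d → Fin N → ℝ := U ρ with hwdef
  have hUeq : ∀ i l, F w i l = ρ * ∑ j ∈ Finset.univ.erase i, π (w j l - c - w i l) := by
    intro i l
    have := hU ρ hρ i l
    linarith
  have hwF0 : ∀ i l, 0 ≤ F w i l := by
    intro i l
    rw [hUeq i l]
    exact mul_nonneg hρ (Finset.sum_nonneg fun j _ => hπnn _)
  have hw_bd : ∀ i l, w i l ≤ S / γ ∧ -(S / γ) ≤ w i l := by
    apply bound_lemma hN hd hγ hFmono hS w hwF0
    intro i l hmax
    rw [hUeq i l]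
    have hsum : ∑ j ∈ Finset.univ.erase i, π (w j l - c - w i l) = 0 := by
      apply Finset.sum_eq_zero
      intro j _
      apply hπ0
      have := hmax j l
      linarith
    rw [hsum, mul_zero]
  have hwzero : ∀ i l, F w i l = 0 := by
    intro i l
    rw [hUeq i l]
    have hsum : ∑ j ∈ Finset.univ.erase i, π (w j l - c - w i l) = 0 := by
      apply Finset.sum_eq_zero
      intro j _
      apply hπ0
      have h1 := (hw_bd j l).1
      have h2 := (hw_bd i l).2
      linarith
    rw [hsum, mul_zero]
  exact zero_unique hN hd hγ hFmono hwzero huzero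
end
end
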